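/- In the polynomial quotient ring S = Z[x_1, ..., x_{2n}] / (x_1^2, ..., x_{2n}^2, e_1, ..., e_{2n}), where e_k is the k-th elementary symmetric polynomial in x_1,...,x_{2n}, the product of any element of the augmentation ideal (the ideal generated by x_1,...,x_{2n}) with any homogeneous element of top degree n is zero. -/

import Mathlib

open MvPolynomial

/-- The defining ideal of `S = ℤ[x_1,...,x_{2n}]/(x_i², e_1,...,e_{2n})`, where
`e_k` is the `k`-th elementary symmetric polynomial. -/
noncomputable def springerIdeal (n : ℕ) : Ideal (MvPolynomial (Fin (2 * n)) ℤ) :=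
  Ideal.span
    ((Set.range fun i : Fin (2 * n) => (X i : MvPolynomial (Fin (2 * n)) ℤ) ^ 2) ∪
     ((fun k => esymm (Fin (2 * n)) ℤ k) '' Set.Icc 1 (2 * n)))

open Finset

/-- Elementary symmetric polynomial in the variables indexed by a subset `A`. -/
noncomputable def esA (n : ℕ) (A : Finset (Fin (2*n))) (d : ℕ) : MvPolynomial (Fin (2*n)) ℤ :=
  ∑ T ∈ Finset.powersetCard d A, ∏ i ∈ T, X i

lemma esA_zero (n : ℕ) (A : Finset (Fin (2*n))) : esA n A 0 = 1 := by
  simp [esA]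

lemma esA_empty (n d : ℕ) : esA n ∅ (d+1) = 0 := by
  rw [esA, Finset.powersetCard_eq_empty.2 (by simp), Finset.sum_empty]

lemma esA_univ (n d : ℕ) : esA n univ d = esymm (Fin (2*n)) ℤ d := rfl

lemma esA_insert (n d : ℕ) {j : Fin (2*n)} {A : Finset (Fin (2*n))} (h : j ∉ A) :
    esA n (insert j A) (d+1) = esA n A (d+1) + X j * esA n A d := by
  rw [esA, Finset.powersetCard_succ_insert h, Finset.sum_union, Finset.sum_image]
  · rw [esA, esA, Finset.mul_sum]
    congr 1
    refine Finset.sum_congr rfl fun T hT => ?_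
    rw [Finset.prod_insert fun hj => h ((Finset.mem_powersetCard.1 hT).1 hj)]
  · intro T hT U hU hTU
    have hjT : j ∉ T := fun hj => h ((Finset.mem_powersetCard.1 hT).1 hj)
    have hjU : j ∉ U := fun hj => h ((Finset.mem_powersetCard.1 hU).1 hj)
    rwa [Finset.insert_erase_invOn.2.injOn.eq_iff] at hTU <;> simp [hjT, hjU]
  · rw [Finset.disjoint_left]
    intro T hT hT2
    obtain ⟨U, hU, rfl⟩ := Finset.mem_image.1 hT2
    exact h ((Finset.mem_powersetCard.1 hT).1 (Finset.mem_insert_self j U))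

lemma sq_mem (n : ℕ) (j : Fin (2*n)) : (X j : MvPolynomial (Fin (2*n)) ℤ)^2 ∈ springerIdeal n :=
  Ideal.subset_span (Or.inl ⟨j, rfl⟩)

lemma esymm_mem (n : ℕ) {d : ℕ} (hd : 1 ≤ d) : esymm (Fin (2*n)) ℤ d ∈ springerIdeal n := by
  rcases le_or_gt d (2*n) with h | h
  · exact Ideal.subset_span (Or.inr ⟨d, ⟨hd, h⟩, rfl⟩)
  · have : esymm (Fin (2*n)) ℤ d = 0 := by
      rw [esymm, Finset.powersetCard_eq_empty.2 (by simpa using h), Finset.sum_empty]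
    rw [this]; exact Ideal.zero_mem _

/-- Modulo the Springer ideal, `e_d(A) ≡ (-1)^d e_d(Aᶜ)`. -/
lemma main_lemma (n : ℕ) (A : Finset (Fin (2*n))) :
    ∀ d, Ideal.Quotient.mk (springerIdeal n) (esA n A d)
      = (-1)^d * Ideal.Quotient.mk (springerIdeal n) (esA n Aᶜ d) := by
  induction A using Finset.induction_on with
  | empty =>
    rintro (_ | d)
    · rw [esA_zero, Finset.compl_empty, esA_zero, pow_zero, one_mul]
    · rw [esA_empty, map_zero, Finset.compl_empty, esA_univ,
        Ideal.Quotient.eq_zero_iff_mem.2 (esymm_mem n (Nat.succ_le_succ (Nat.zero_le d))), mul_zero]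
  | @insert j s hj ih =>
    have hjC : j ∉ (insert j s)ᶜ := by simp
    have hC : sᶜ = insert j (insert j s)ᶜ := by
      rw [Finset.compl_insert, Finset.insert_erase (Finset.mem_compl.2 hj)]
    rintro (_ | d)
    · rw [esA_zero, esA_zero, pow_zero, one_mul]
    rcases d with _ | e
    · -- degree 1
      have r1 : esA n (insert j s) 1 = esA n s 1 + X j * esA n s 0 := esA_insert n 0 hj
      have r2 : esA n sᶜ 1 = esA n (insert j s)ᶜ 1 + X j * esA n (insert j s)ᶜ 0 := by
        rw [hC]; exact esA_insert n 0 hjC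
      have IH1 := ih 1
      rw [r2, esA_zero, mul_one] at IH1
      rw [r1, esA_zero, mul_one, map_add, IH1, map_add]
      ring
    · -- degree e+2
      have r1 : esA n (insert j s) (e+2) = esA n s (e+2) + X j * esA n s (e+1) :=
        esA_insert n (e+1) hj
      have r2 : esA n sᶜ (e+2) = esA n (insert j s)ᶜ (e+2) + X j * esA n (insert j s)ᶜ (e+1) := by
        rw [hC]; exact esA_insert n (e+1) hjC
      have r3 : esA n sᶜ (e+1) = esA n (insert j s)ᶜ (e+1) + X j * esA n (insert j s)ᶜ e := by
        rw [hC]; exact esA_insert n e hjC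
      have hx2 : (Ideal.Quotient.mk (springerIdeal n) (X j))^2 = 0 := by
        rw [← map_pow, Ideal.Quotient.eq_zero_iff_mem]; exact sq_mem n j
      have IH2 := ih (e+2)
      have IH1 := ih (e+1)
      rw [r2, map_add, map_mul] at IH2
      rw [r3, map_add, map_mul] at IH1
      rw [r1, map_add, map_mul, IH2, IH1]
      linear_combination (((-1 : MvPolynomial (Fin (2*n)) ℤ ⧸ springerIdeal n)^(e+1)) *
        Ideal.Quotient.mk (springerIdeal n) (esA n (insert j s)ᶜ e)) * hx2

/-- Any squarefree monomial of degree `n+1` lies in the Springer ideal. -/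
lemma prod_mem' (n : ℕ) (S : Finset (Fin (2*n))) (h : S.card = n+1) :
    (∏ i ∈ S, (X i : MvPolynomial (Fin (2*n)) ℤ)) ∈ springerIdeal n := by
  have hS : esA n S (n+1) = ∏ i ∈ S, X i := by
    rw [esA, ← h, Finset.powersetCard_self, Finset.sum_singleton]
  have hcc : Sᶜ.card < n+1 := by
    have h1 := Finset.card_le_univ S
    have h2 := Finset.card_compl S
    simp only [Finset.card_univ, Fintype.card_fin] at h1 h2
    omega
  have hc : esA n Sᶜ (n+1) = 0 := by
    rw [esA, Finset.powersetCard_eq_empty.2 hcc, Finset.sum_empty]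
  rw [← Ideal.Quotient.eq_zero_iff_mem, ← hS, main_lemma n S (n+1), hc, map_zero, mul_zero]

/-- Any monomial of total degree `n+1` lies in the Springer ideal. -/
lemma mono_mem (n : ℕ) (m : Fin (2*n) →₀ ℕ) (hm : (m.sum fun _ e => e) = n+1) :
    (monomial m (1:ℤ)) ∈ springerIdeal n := by
  by_cases hsq : ∃ j, 2 ≤ m j
  · obtain ⟨j, hj⟩ := hsq
    have hle : Finsupp.single j 2 ≤ m := by
      rw [Finsupp.single_le_iff]; exact hj
    have : monomial m (1:ℤ) = X j ^ 2 * monomial (m - Finsupp.single j 2) 1 := by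
      rw [X_pow_eq_monomial, monomial_mul, one_mul, add_tsub_cancel_of_le hle]
    rw [this]
    exact Ideal.mul_mem_right _ _ (sq_mem n j)
  · push_neg at hsq
    have h1 : ∀ i ∈ m.support, m i = 1 := by
      intro i hi
      have := Finsupp.mem_support_iff.1 hi
      have := hsq i
      omega
    have hcard : m.support.card = n+1 := by
      rw [← hm, Finsupp.sum]
      rw [Finset.sum_congr rfl h1, Finset.sum_const, smul_eq_mul, mul_one]
    have : monomial m (1:ℤ) = ∏ i ∈ m.support, X i := by
      rw [monomial_eq, C_1, one_mul, Finsupp.prod]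
      exact Finset.prod_congr rfl fun i hi => by rw [h1 i hi, pow_one]
    rw [this]
    exact prod_mem' n m.support hcard

/-- Any homogeneous polynomial of degree `n+1` lies in the Springer ideal. -/
lemma homog_mem (n : ℕ) (p : MvPolynomial (Fin (2*n)) ℤ) (hp : p.IsHomogeneous (n+1)) :
    p ∈ springerIdeal n := by
  rw [p.as_sum]
  refine Ideal.sum_mem _ fun m hm => ?_
  have hd : (m.sum fun _ e => e) = n+1 := by
    have := hp (mem_support_iff.1 hm)
    erw [← Finsupp.degree_eq_weight_one] at this
    simpa [Finsupp.degree_apply, Finsupp.sum] using this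
  have : (monomial m (coeff m p)) = C (coeff m p) * monomial m 1 := by
    rw [C_mul_monomial, mul_one]
  rw [this]
  exact Ideal.mul_mem_left _ _ (mono_mem n m hd)

/-- In `S`, the product of any element of the augmentation ideal (generated by the
`x_i`) with any homogeneous element of top degree `n` is zero. -/
theorem stmt14 (n : ℕ) (p q : MvPolynomial (Fin (2 * n)) ℤ)
    (hp : p.IsHomogeneous n)
    (hq : q ∈ Ideal.span (Set.range (X : Fin (2 * n) → MvPolynomial (Fin (2 * n)) ℤ))) :
    Ideal.Quotient.mk (springerIdeal n) (q * p) = 0 := by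
  rw [Ideal.Quotient.eq_zero_iff_mem]
  induction hq using Submodule.span_induction with
  | mem x hx =>
    obtain ⟨i, rfl⟩ := hx
    exact homog_mem n _ (by simpa [add_comm] using (isHomogeneous_X ℤ i).mul hp)
  | zero => simp only [zero_mul]; exact Ideal.zero_mem _
  | add x y _ _ hx hy => rw [add_mul]; exact Ideal.add_mem _ hx hy
  | smul r x _ hx => rw [smul_eq_mul, mul_assoc]; exact Ideal.mul_mem_left _ _ hx
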